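/- Let 𝒳 be a finite type and K a positive integer, and let p, q : 𝒳 × Fin K → ℝ be joint distributions (nonnegative, summing to 1) with p(x) := Σ_k p(x,k) > 0 for every x and p(c=k) := Σ_x p(x,k) > 0 and q(c=k) := Σ_x q(x,k) > 0 for every k, satisfying the Shared Support condition p(x,k)/p(c=k) = q(x,k)/q(c=k) for all x, k. Suppose the domain classifier is deterministic: there is a map k* : 𝒳 → Fin K with p(c=k*(x)|x) = 1 for every x. Then the importance weight reduces to q(x)/p(x) = λ_{k*(x)} for every x, where λ_k := q(c=k)/p(c=k) and p(c=k|x) := p(x,k)/p(x). -/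

import Mathlib

/-- If the domain classifier is deterministic (`p(c = k*(x) | x) = 1` for all `x`),
then under Shared Support the importance weight reduces to `λ_{k*(x)}`. -/
theorem importance_weight_deterministic_classifier
    {𝒳 : Type*} [Fintype 𝒳] {K : ℕ} (hK : 0 < K)
    (p q : 𝒳 × Fin K → ℝ)
    (hp0 : ∀ z, 0 ≤ p z) (hq0 : ∀ z, 0 ≤ q z)
    (hp1 : ∑ z, p z = 1) (hq1 : ∑ z, q z = 1)
    (hpx : ∀ x, 0 < ∑ k, p (x, k))
    (hpc : ∀ k, 0 < ∑ x, p (x, k))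
    (hqc : ∀ k, 0 < ∑ x, q (x, k))
    (hshare : ∀ x k, p (x, k) / (∑ x', p (x', k)) = q (x, k) / (∑ x', q (x', k)))
    (kstar : 𝒳 → Fin K)
    (hdet : ∀ x, p (x, kstar x) / (∑ k, p (x, k)) = 1) :
    ∀ x, (∑ k, q (x, k)) / (∑ k, p (x, k)) =
      (∑ x', q (x', kstar x)) / (∑ x', p (x', kstar x)) := by
  intro x
  have hpxpos := hpx x
  -- p (x, kstar x) = ∑ k, p (x, k)
  have hpk : p (x, kstar x) = ∑ k, p (x, k) := by
    have := hdet x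
    field_simp at this
    linarith [this]
  -- p (x, k) = 0 for k ≠ kstar x
  have hpz : ∀ k, k ≠ kstar x → p (x, k) = 0 := by
    intro k hk
    have hsum : ∑ j, p (x, j) = p (x, kstar x) + ∑ j ∈ Finset.univ.erase (kstar x), p (x, j) := by
      exact (Finset.add_sum_erase _ (fun j => p (x, j)) (Finset.mem_univ _)).symm
    have hrest : ∑ j ∈ Finset.univ.erase (kstar x), p (x, j) = 0 := by linarith [hpk, hsum]
    have := (Finset.sum_eq_zero_iff_of_nonneg (fun j _ => hp0 (x, j))).mp hrest k
      (Finset.mem_erase.mpr ⟨hk, Finset.mem_univ k⟩)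
    exact this
  -- q (x, k) = 0 for k ≠ kstar x
  have hqz : ∀ k, k ≠ kstar x → q (x, k) = 0 := by
    intro k hk
    have h := hshare x k
    rw [hpz k hk] at h
    have : q (x, k) / (∑ x', q (x', k)) = 0 := by
      rw [← h]; simp
    have hqcpos := hqc k
    field_simp at this
    simpa using this
  have hqk : ∑ k, q (x, k) = q (x, kstar x) := by
    rw [Finset.sum_eq_single (kstar x)]
    · intro b _ hb; exact hqz b hb
    · simp
  -- positivity of p (x, kstar x)
  have hppos : 0 < p (x, kstar x) := hpk ▸ hpxpos
  have h := hshare x (kstar x)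
  rw [hqk, ← hpk]
  have hAD := (div_eq_div_iff (hpc (kstar x)).ne' (hqc (kstar x)).ne').mp h
  rw [div_eq_div_iff hppos.ne' (hpc (kstar x)).ne']
  linarith
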